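/- For m > 0 and T > 0, define G_m on the triangle {(t,s) : -t ≤ s ≤ t, t ∈ [0,T]} by G_m(t,s) = (cos(√m s)·csc(√m T)·cos(√m (t−T)) + sinh(√m s)·csch(√m T)·sinh(√m (t−T))) / (2√m), assuming √m T is not an integer multiple of π. Then G_m(t,t⁻) and G_m(t,t⁺) agree (G_m extends continuously across the diagonal) and ∂G_m/∂t(t,t⁻) − ∂G_m/∂t(t,t⁺) = 1 for t ∈ (0,T), where the off-triangle values are given by the symmetries G_m(t,s)=G_m(s,t)=G_m(-t,-s). -/

import Mathlib

/-- Explicit expression of the Green's function `G_m` (for `m > 0`) on the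
triangle `{(t,s) : -t ≤ s ≤ t}`. -/
noncomputable def gpos (m T t s : ℝ) : ℝ :=
  (Real.cos (Real.sqrt m * s) * (1 / Real.sin (Real.sqrt m * T)) *
      Real.cos (Real.sqrt m * (t - T)) +
    Real.sinh (Real.sqrt m * s) * (1 / Real.sinh (Real.sqrt m * T)) *
      Real.sinh (Real.sqrt m * (t - T))) / (2 * Real.sqrt m)

/-- Extension of `gpos` to the whole square by the symmetries
`G(t,s) = G(s,t) = G(-t,-s)`. -/
noncomputable def Gfull (m T t s : ℝ) : ℝ :=
  if |s| ≤ |t| then (if 0 ≤ t then gpos m T t s else gpos m T (-t) (-s))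
  else (if 0 ≤ s then gpos m T s t else gpos m T (-s) (-t))

lemma continuous_gpos_fst (m T s : ℝ) : Continuous (fun t => gpos m T t s) := by
  unfold gpos; fun_prop

lemma continuous_gpos_snd (m T t : ℝ) : Continuous (fun s => gpos m T t s) := by
  unfold gpos; fun_prop

/-- derivative of `gpos` in the first variable -/
lemma hasDerivAt_gpos_fst (m T s t : ℝ) :
    HasDerivAt (fun τ => gpos m T τ s)
      ((Real.cos (Real.sqrt m * s) * (1 / Real.sin (Real.sqrt m * T)) *
          (-Real.sin (Real.sqrt m * (t - T)) * Real.sqrt m) +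
        Real.sinh (Real.sqrt m * s) * (1 / Real.sinh (Real.sqrt m * T)) *
          (Real.cosh (Real.sqrt m * (t - T)) * Real.sqrt m)) / (2 * Real.sqrt m)) t := by
  have hlin : HasDerivAt (fun τ : ℝ => Real.sqrt m * (τ - T)) (Real.sqrt m) t := by
    simpa using ((hasDerivAt_id t).sub_const T).const_mul (Real.sqrt m)
  have hcos : HasDerivAt (fun τ => Real.cos (Real.sqrt m * (τ - T)))
      (-Real.sin (Real.sqrt m * (t - T)) * Real.sqrt m) t :=
    (Real.hasDerivAt_cos _).comp t hlin
  have hsinh : HasDerivAt (fun τ => Real.sinh (Real.sqrt m * (τ - T)))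
      (Real.cosh (Real.sqrt m * (t - T)) * Real.sqrt m) t :=
    (Real.hasDerivAt_sinh _).comp t hlin
  exact ((hcos.const_mul _).add (hsinh.const_mul _)).div_const _

/-- derivative of `gpos` in the second variable -/
lemma hasDerivAt_gpos_snd (m T s t : ℝ) :
    HasDerivAt (fun τ => gpos m T s τ)
      ((-Real.sin (Real.sqrt m * t) * Real.sqrt m * (1 / Real.sin (Real.sqrt m * T)) *
          Real.cos (Real.sqrt m * (s - T)) +
        Real.cosh (Real.sqrt m * t) * Real.sqrt m * (1 / Real.sinh (Real.sqrt m * T)) *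
          Real.sinh (Real.sqrt m * (s - T))) / (2 * Real.sqrt m)) t := by
  have hlin : HasDerivAt (fun τ : ℝ => Real.sqrt m * τ) (Real.sqrt m) t := by
    simpa using (hasDerivAt_id t).const_mul (Real.sqrt m)
  have hcos : HasDerivAt (fun τ => Real.cos (Real.sqrt m * τ))
      (-Real.sin (Real.sqrt m * t) * Real.sqrt m) t :=
    (Real.hasDerivAt_cos _).comp t hlin
  have hsinh : HasDerivAt (fun τ => Real.sinh (Real.sqrt m * τ))
      (Real.cosh (Real.sqrt m * t) * Real.sqrt m) t :=
    (Real.hasDerivAt_sinh _).comp t hlin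
  exact (((hcos.mul_const _).mul_const _).add ((hsinh.mul_const _).mul_const _)).div_const _

theorem stmt5 (m T : ℝ) (hm : 0 < m) (hT : 0 < T)
    (hres : ∀ k : ℤ, Real.sqrt m * T ≠ k * Real.pi) :
    ∀ t ∈ Set.Ioo 0 T,
      ContinuousAt (fun s => Gfull m T t s) t ∧
      ∃ A B : ℝ,
        Filter.Tendsto (fun s => deriv (fun τ => Gfull m T τ s) t)
          (nhdsWithin t (Set.Iio t)) (nhds A) ∧
        Filter.Tendsto (fun s => deriv (fun τ => Gfull m T τ s) t)
          (nhdsWithin t (Set.Ioi t)) (nhds B) ∧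
        A - B = 1 := by
  intro t ht
  obtain ⟨ht0, htT⟩ := ht
  set c := Real.sqrt m with hcdef
  have hcpos : 0 < c := Real.sqrt_pos.mpr hm
  have hc : c ≠ 0 := ne_of_gt hcpos
  have hsin : Real.sin (c * T) ≠ 0 := by
    intro h
    rw [Real.sin_eq_zero_iff] at h
    obtain ⟨n, hn⟩ := h
    exact hres n hn.symm
  have hsinh : Real.sinh (c * T) ≠ 0 :=
    ne_of_gt (Real.sinh_pos_iff.mpr (by positivity))
  have habs_t : |t| = t := abs_of_pos ht0
  constructor
  · -- continuity
    have hval : Gfull m T t t = gpos m T t t := by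
      simp [Gfull, le_refl, ht0.le]
    rw [ContinuousAt, hval, ← nhdsLE_sup_nhdsGT t, Filter.tendsto_sup]
    constructor
    · -- from the left
      have heq : ∀ᶠ s in nhdsWithin t (Set.Iic t), Gfull m T t s = gpos m T t s := by
        filter_upwards [Ioc_mem_nhdsLE (show -t < t by linarith)] with s hs
        have habs : |s| ≤ |t| := by
          rw [habs_t]; exact abs_le.mpr ⟨hs.1.le, hs.2⟩
        simp [Gfull, habs, ht0.le]
      exact (((continuous_gpos_snd m T t).tendsto t).mono_left
        nhdsWithin_le_nhds).congr' (heq.mono fun _ h => h.symm)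
    · -- from the right
      have heq : ∀ᶠ s in nhdsWithin t (Set.Ioi t), Gfull m T t s = gpos m T s t := by
        filter_upwards [self_mem_nhdsWithin] with s hs
        have hst : t < s := hs
        have habs : ¬ |s| ≤ |t| := by
          rw [habs_t, abs_of_pos (lt_trans ht0 hst)]; linarith
        simp [Gfull, habs, (lt_trans ht0 hst).le]
      exact (((continuous_gpos_fst m T t).tendsto t).mono_left
        nhdsWithin_le_nhds).congr' (heq.mono fun _ h => h.symm)
  · -- the jump of the derivative
    refine ⟨(Real.cos (c * t) * (1 / Real.sin (c * T)) * (-Real.sin (c * (t - T)) * c) +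
        Real.sinh (c * t) * (1 / Real.sinh (c * T)) * (Real.cosh (c * (t - T)) * c)) / (2 * c),
      (-Real.sin (c * t) * c * (1 / Real.sin (c * T)) * Real.cos (c * (t - T)) +
        Real.cosh (c * t) * c * (1 / Real.sinh (c * T)) * Real.sinh (c * (t - T))) / (2 * c),
      ?_, ?_, ?_⟩
    · -- limit from the left
      have heq : ∀ᶠ s in nhdsWithin t (Set.Iio t),
          deriv (fun τ => Gfull m T τ s) t =
          (Real.cos (c * s) * (1 / Real.sin (c * T)) * (-Real.sin (c * (t - T)) * c) +
            Real.sinh (c * s) * (1 / Real.sinh (c * T)) * (Real.cosh (c * (t - T)) * c)) /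
            (2 * c) := by
        filter_upwards [Ioo_mem_nhdsLT ht0] with s hs
        have hfeq : (fun τ => Gfull m T τ s) =ᶠ[nhds t] (fun τ => gpos m T τ s) := by
          filter_upwards [Ioi_mem_nhds hs.2] with τ hτ
          have hτ0 : 0 < τ := lt_trans hs.1 hτ
          have habs : |s| ≤ |τ| := by
            rw [abs_of_pos hs.1, abs_of_pos hτ0]; exact hτ.le
          simp [Gfull, habs, hτ0.le]
        rw [hfeq.deriv_eq]
        exact (hasDerivAt_gpos_fst m T s t).deriv
      refine Filter.Tendsto.congr' (heq.mono fun _ h => h.symm) ?_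
      have hcont : Continuous (fun s : ℝ =>
          (Real.cos (c * s) * (1 / Real.sin (c * T)) * (-Real.sin (c * (t - T)) * c) +
            Real.sinh (c * s) * (1 / Real.sinh (c * T)) * (Real.cosh (c * (t - T)) * c)) /
            (2 * c)) := by fun_prop
      exact (hcont.tendsto t).mono_left nhdsWithin_le_nhds
    · -- limit from the right
      have heq : ∀ᶠ s in nhdsWithin t (Set.Ioi t),
          deriv (fun τ => Gfull m T τ s) t =
          (-Real.sin (c * t) * c * (1 / Real.sin (c * T)) * Real.cos (c * (s - T)) +
            Real.cosh (c * t) * c * (1 / Real.sinh (c * T)) * Real.sinh (c * (s - T))) /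
            (2 * c) := by
        filter_upwards [self_mem_nhdsWithin] with s hs
        have hst : t < s := hs
        have hs0 : 0 < s := lt_trans ht0 hst
        have hfeq : (fun τ => Gfull m T τ s) =ᶠ[nhds t] (fun τ => gpos m T s τ) := by
          filter_upwards [Ioo_mem_nhds (show -s < t by linarith) hst] with τ hτ
          have habs : ¬ |s| ≤ |τ| := by
            rw [abs_of_pos hs0]
            rcases abs_cases τ with ⟨h1, _⟩ | ⟨h1, _⟩ <;> rw [h1] <;>
              [exact not_le.mpr hτ.2; exact not_le.mpr (by linarith [hτ.1])]
          simp [Gfull, habs, hs0.le]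
        rw [hfeq.deriv_eq]
        exact (hasDerivAt_gpos_snd m T s t).deriv
      refine Filter.Tendsto.congr' (heq.mono fun _ h => h.symm) ?_
      have hcont : Continuous (fun s : ℝ =>
          (-Real.sin (c * t) * c * (1 / Real.sin (c * T)) * Real.cos (c * (s - T)) +
            Real.cosh (c * t) * c * (1 / Real.sinh (c * T)) * Real.sinh (c * (s - T))) /
            (2 * c)) := by fun_prop
      exact (hcont.tendsto t).mono_left nhdsWithin_le_nhds
    · -- A - B = 1
      have hsub : c * (t - T) = c * t - c * T := by ring
      rw [hsub, Real.sin_sub, Real.cos_sub, Real.sinh_sub, Real.cosh_sub]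
      field_simp
      linear_combination (Real.sin (c * T) * Real.sinh (c * T)) *
          Real.sin_sq_add_cos_sq (c * t) +
        (Real.sin (c * T) * Real.sinh (c * T)) * Real.cosh_sq_sub_sinh_sq (c * t)
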